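/- Let N ≥ 1, let E : Fin N → ℝ with E 0 < E i for all i ≠ 0, and let c : Fin N → ℂ with c 0 ≠ 0. Then the function t ↦ (‖c 0‖² · Real.exp (-2 · (E 0) · t)) / (∑ i, ‖c i‖² · Real.exp (-2 · (E i) · t)) tends to 1 as t → ∞. -/

import Mathlib

open Filter

/-- ITE fidelity convergence: the squared fidelity with the ground state tends to `1`. -/
theorem stmt_12 (n : ℕ) (E : Fin (n + 1) → ℝ)
    (hE : ∀ i : Fin (n + 1), i ≠ 0 → E 0 < E i)
    (c : Fin (n + 1) → ℂ) (hc : c 0 ≠ 0) :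
    Tendsto (fun t : ℝ =>
        (‖c 0‖ ^ 2 * Real.exp (-2 * E 0 * t)) /
          (∑ i, ‖c i‖ ^ 2 * Real.exp (-2 * E i * t)))
      atTop (nhds 1) := by
  set a : ℝ := ‖c 0‖ ^ 2 with ha
  have ha0 : a ≠ 0 := by
    simp [ha, pow_eq_zero_iff, norm_eq_zero, hc]
  set g : ℝ → ℝ := fun t => ∑ i, ‖c i‖ ^ 2 * Real.exp (-2 * (E i - E 0) * t) with hg
  have hgt : Tendsto g atTop (nhds a) := by
    have : Tendsto g atTop (nhds (∑ i : Fin (n + 1),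
        if i = 0 then a else 0)) := by
      apply tendsto_finset_sum
      intro i _
      by_cases hi : i = 0
      · subst hi
        simp only [if_pos rfl, sub_self, mul_zero, zero_mul, Real.exp_zero, mul_one, ha]
        exact tendsto_const_nhds
      · simp only [if_neg hi]
        rw [show (0 : ℝ) = ‖c i‖ ^ 2 * 0 by ring]
        apply Tendsto.const_mul
        apply Real.tendsto_exp_atBot.comp
        apply Tendsto.const_mul_atTop_of_neg
        · have := hE i hi; linarith
        · exact tendsto_id
    simpa [Finset.sum_ite_eq'] using this
  have key : Tendsto (fun t => a / g t) atTop (nhds 1) := by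
    have := (tendsto_const_nhds (x := a)).div hgt ha0
    rw [div_self ha0] at this; exact this
  refine key.congr fun t => ?_
  have hexp : Real.exp (-2 * E 0 * t) ≠ 0 := Real.exp_ne_zero _
  have hd : (∑ i, ‖c i‖ ^ 2 * Real.exp (-2 * E i * t))
      = g t * Real.exp (-2 * E 0 * t) := by
    rw [hg, Finset.sum_mul]
    congr 1; funext i
    have : Real.exp (-2 * (E i - E 0) * t) * Real.exp (-2 * E 0 * t)
        = Real.exp (-2 * E i * t) := by
      rw [← Real.exp_add]; congr 1; ring
    rw [← this]; ring
  rw [hd, ha, mul_comm (g t), ← div_div, mul_div_assoc, div_self hexp, mul_one]
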